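/- Let d ≥ 0 and let (N, n_0, …, n_d) be a (d+2)-tuple of nonnegative integers. If †(N, n_0, …, n_d) = 0 then C(N, n_0, …, n_d) = 0, and if †(N, n_0, …, n_d) = 1 then (C(N, n_0, …, n_d) : ℚ) = F(N, n_0, …, n_d). -/

import Mathlib

/-- The Vandermonde product `∏_{i<j} (x i - x j)`. -/
def vmd {k : ℕ} {R : Type*} [CommRing R] (x : Fin k → R) : R :=
  ∏ i : Fin k, ∏ j ∈ Finset.univ.filter (fun j => i < j), (x i - x j)

/-- `C(N, n_0, …, n_d)`: the number of lists `(v_1, …, v_N)` of vectors in `{0,1}^{d+1}`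
summing to `(n_0, …, n_d)` all of whose partial sums are weakly decreasing in the
coordinates. -/
noncomputable def ballotCount (d N : ℕ) (n : Fin (d + 1) → ℕ) : ℕ :=
  Nat.card {v : Fin N → Fin (d + 1) → ℕ //
    (∀ k i, v k i ≤ 1) ∧
    (∀ i, ∑ k, v k i = n i) ∧
    (∀ L : Fin N, ∀ i j : Fin (d + 1), i ≤ j →
      ∑ k ∈ Finset.univ.filter (fun k => k ≤ L), v k j ≤
        ∑ k ∈ Finset.univ.filter (fun k => k ≤ L), v k i)}

/-- `F(N, n_0, …, n_d) = (∏_i ∏_{k<n_i} (N+i-k)) · V(m_0,…,m_d) / (m_0! ⋯ m_d!)`,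
where `m_i = n_i + d - i`. -/
def Fq (d N : ℕ) (n : Fin (d + 1) → ℕ) : ℚ :=
  (∏ i : Fin (d + 1), ∏ k ∈ Finset.range (n i), ((N : ℚ) + (i : ℕ) - (k : ℕ))) *
    vmd (fun i : Fin (d + 1) => ((n i + d - (i : ℕ) : ℕ) : ℚ)) /
      ∏ i : Fin (d + 1), (Nat.factorial (n i + d - (i : ℕ)) : ℚ)

namespace S0
open Finset Polynomial Matrix

variable {k : ℕ}

lemma vmd_eq (x : Fin k → ℚ) : vmd x = ∏ i : Fin k, ∏ j ∈ Finset.Ioi i, (x i - x j) := by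
  unfold vmd
  apply Finset.prod_congr rfl
  intro i _
  apply Finset.prod_congr _ (fun _ _ => rfl)
  ext j; simp

lemma vmd_zero_of_eq {x : Fin k → ℚ} {i j : Fin k} (hij : i < j) (h : x i = x j) : vmd x = 0 := by
  rw [vmd_eq]
  apply Finset.prod_eq_zero (Finset.mem_univ i)
  apply Finset.prod_eq_zero (show j ∈ Finset.Ioi i by simpa using hij)
  simp [h]

noncomputable def eps (k : ℕ) : ℚ := ∏ i : Fin k, ∏ j ∈ Finset.Ioi i, (-1 : ℚ)

lemma det_vand_eq (x : Fin k → ℚ) : (Matrix.vandermonde x).det = eps k * vmd x := by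
  rw [Matrix.det_vandermonde, vmd_eq, eps, ← Finset.prod_mul_distrib]
  apply Finset.prod_congr rfl
  intro i _
  rw [← Finset.prod_mul_distrib]
  apply Finset.prod_congr rfl
  intro j _
  ring

lemma eps_mul_eps : eps k * eps k = 1 := by
  rw [eps, ← Finset.prod_mul_distrib]
  apply Finset.prod_eq_one
  intro i _
  rw [← Finset.prod_mul_distrib]
  apply Finset.prod_eq_one
  intro j _
  norm_num

lemma vmd_eq_eps_det (x : Fin k → ℚ) : vmd x = eps k * (Matrix.vandermonde x).det := by
  rw [det_vand_eq, ← mul_assoc, eps_mul_eps, one_mul]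

noncomputable def Pp (c : ℚ) (j : ℕ) : ℚ[X] := C c * X ^ j - X ^ (j + 1) + X * (X - 1) ^ j

lemma Pp_eval (c x : ℚ) (j : ℕ) : (Pp c j).eval x = (c - x) * x ^ j + x * (x - 1) ^ j := by
  simp [Pp]; ring

lemma natDegree_Xsub1_pow (j : ℕ) : ((X - 1 : ℚ[X]) ^ j).natDegree = j := by
  have h1 : (X - 1 : ℚ[X]) = X - C 1 := by norm_num
  rw [h1, natDegree_pow, natDegree_X_sub_C, mul_one]

lemma monic_Xsub1_pow (j : ℕ) : ((X - 1 : ℚ[X]) ^ j).Monic := by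
  have h1 : (X - 1 : ℚ[X]) = X - C 1 := by norm_num
  rw [h1]; exact (monic_X_sub_C 1).pow j

lemma coeff_Pp_high (c : ℚ) (j t : ℕ) (ht : j < t) : (Pp c j).coeff t = 0 := by
  obtain ⟨t, rfl⟩ : ∃ t', t = t' + 1 := ⟨t - 1, by omega⟩
  have hjt : j ≤ t := by omega
  rw [Pp, coeff_add, coeff_sub, coeff_C_mul, coeff_X_pow, coeff_X_pow, coeff_X_mul]
  rcases eq_or_lt_of_le hjt with rfl | hlt
  · have : ((X - 1 : ℚ[X]) ^ j).coeff j = 1 := by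
      have := (monic_Xsub1_pow j).leadingCoeff
      rwa [leadingCoeff, natDegree_Xsub1_pow] at this
    simp [this, Nat.ne_of_gt ht]
  · have : ((X - 1 : ℚ[X]) ^ j).coeff t = 0 := by
      apply coeff_eq_zero_of_natDegree_lt
      rwa [natDegree_Xsub1_pow]
    rw [this, if_neg (by omega : ¬ (t + 1 = j)), if_neg (by omega : ¬ (t + 1 = j + 1))]
    ring

lemma coeff_Pp_diag (c : ℚ) (j : ℕ) : (Pp c j).coeff j = c - j := by
  rw [Pp, coeff_add, coeff_sub, coeff_C_mul, coeff_X_pow, coeff_X_pow]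
  rcases Nat.eq_zero_or_pos j with rfl | hj
  · simp
  · obtain ⟨t, rfl⟩ : ∃ t, j = t + 1 := ⟨j - 1, by omega⟩
    rw [coeff_X_mul]
    have : ((X - 1 : ℚ[X]) ^ (t + 1)).coeff t = -(t + 1 : ℚ) := by
      have h1 : (X - 1 : ℚ[X]) = X - C 1 := by norm_num
      have hnc : ((X - 1 : ℚ[X]) ^ (t + 1)).nextCoeff = -(t + 1 : ℚ) := by
        rw [h1, Monic.nextCoeff_pow (monic_X_sub_C 1), nextCoeff_X_sub_C]
        simp [nsmul_eq_mul]
      rw [nextCoeff_of_natDegree_pos (by rw [natDegree_Xsub1_pow]; omega), natDegree_Xsub1_pow] at hnc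
      simpa using hnc
    rw [this]
    simp [(by omega : ¬ (t + 1 = t + 1 + 1))]
    push_cast; ring

lemma natDegree_Pp_le (c : ℚ) (j : ℕ) : (Pp c j).natDegree ≤ j :=
  natDegree_le_iff_coeff_eq_zero.mpr (fun _ ht => coeff_Pp_high c j _ ht)

noncomputable def Qp (c : ℚ) (j : ℕ) : ℚ[X] := Polynomial.C (c - (j : ℚ))⁻¹ * Pp c j

lemma Pp_eq (c : ℚ) (j : ℕ) (hc : c - (j : ℚ) ≠ 0) : Pp c j = C (c - (j : ℚ)) * Qp c j := by
  rw [Qp, ← mul_assoc, ← C_mul, mul_inv_cancel₀ hc, C_1, one_mul]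

lemma natDegree_Qp (c : ℚ) (j : ℕ) (hc : c - (j : ℚ) ≠ 0) : (Qp c j).natDegree = j := by
  apply le_antisymm
  · apply natDegree_le_iff_coeff_eq_zero.mpr
    intro t ht
    rw [Qp, coeff_C_mul, coeff_Pp_high c j t ht, mul_zero]
  · apply le_natDegree_of_ne_zero
    rw [Qp, coeff_C_mul, coeff_Pp_diag, inv_mul_cancel₀ hc]
    exact one_ne_zero

lemma monic_Qp (c : ℚ) (j : ℕ) (hc : c - (j : ℚ) ≠ 0) : (Qp c j).Monic := by
  unfold Polynomial.Monic
  rw [leadingCoeff, natDegree_Qp c j hc, Qp, coeff_C_mul, coeff_Pp_diag, inv_mul_cancel₀ hc]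

lemma det_B (c : ℚ) (hc : ∀ j : Fin k, c - ((j : ℕ) : ℚ) ≠ 0) (x : Fin k → ℚ) :
    (Matrix.of fun i j : Fin k => (c - x i) * x i ^ (j : ℕ) + x i * (x i - 1) ^ (j : ℕ)).det =
      (∏ j : Fin k, (c - ((j : ℕ) : ℚ))) * (Matrix.vandermonde x).det := by
  have h1 : (Matrix.of fun i j : Fin k => (c - x i) * x i ^ (j : ℕ) + x i * (x i - 1) ^ (j : ℕ)) =
      Matrix.of fun i j : Fin k => (c - ((j : ℕ) : ℚ)) * ((Qp c (j : ℕ)).eval (x i)) := by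
    ext i j
    have : (Pp c (j : ℕ)).eval (x i) = (c - ((j : ℕ) : ℚ)) * ((Qp c (j : ℕ)).eval (x i)) := by
      rw [Pp_eq c (j : ℕ) (hc j)]; simp
    rw [Matrix.of_apply, Matrix.of_apply, ← Pp_eval, this]
  rw [h1]
  have h4 := Matrix.det_mul_row (fun j : Fin k => (c - ((j : ℕ) : ℚ)))
    (Matrix.of fun i j : Fin k => (Qp c (j : ℕ)).eval (x i))
  simp only [Matrix.of_apply] at h4
  rw [h4]
  congr 1
  rw [← Matrix.det_eval_matrixOfPolynomials_eq_det_vandermonde x (fun j : Fin k => Qp c (j : ℕ))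
    (fun j => natDegree_Qp c j (hc j)) (fun j => monic_Qp c j (hc j))]

lemma det_expand (c : ℚ) (x : Fin k → ℚ) :
    (Matrix.of fun i j : Fin k => (c - x i) * x i ^ (j : ℕ) + x i * (x i - 1) ^ (j : ℕ)).det =
      ∑ s : Fin k → Bool, (∏ i, (if s i then x i else c - x i)) *
        (Matrix.vandermonde (fun i => x i - (if s i then 1 else 0))).det := by
  classical
  set g : ∀ _ : Fin k, Bool → (Fin k → ℚ) :=
    fun i b => (if b then x i else c - x i) • (fun j : Fin k => (x i - (if b then 1 else 0)) ^ (j : ℕ)) with hg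
  have h1 : (Matrix.of fun i j : Fin k => (c - x i) * x i ^ (j : ℕ) + x i * (x i - 1) ^ (j : ℕ)) =
      fun i => ∑ b : Bool, g i b := by
    funext i j
    rw [Finset.sum_apply]
    simp [hg, Fintype.sum_bool]
    try ring
  have h2 : (Matrix.of fun i j : Fin k => (c - x i) * x i ^ (j : ℕ) + x i * (x i - 1) ^ (j : ℕ)).det
      = Matrix.detRowAlternating (fun i => ∑ b : Bool, g i b) := by
    rw [← h1]; rfl
  rw [h2]
  rw [show (Matrix.detRowAlternating (R := ℚ) (n := Fin k) (fun i => ∑ b : Bool, g i b)) =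
    (Matrix.detRowAlternating (R := ℚ) (n := Fin k)).toMultilinearMap (fun i => ∑ b : Bool, g i b) from rfl]
  rw [MultilinearMap.map_sum]
  apply Finset.sum_congr rfl
  intro s _
  have h3 : (fun i => g i (s i)) =
      fun i => (if s i then x i else c - x i) • (fun j : Fin k => (x i - (if s i then 1 else 0)) ^ (j : ℕ)) := rfl
  rw [h3, MultilinearMap.map_smul_univ]
  rw [smul_eq_mul]
  rfl

lemma alg (c : ℚ) (hc : ∀ j : Fin k, c - ((j : ℕ) : ℚ) ≠ 0) (x : Fin k → ℚ) :
    ∑ s : Fin k → Bool, (∏ i, (if s i then x i else c - x i)) *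
        vmd (fun i => x i - (if s i then 1 else 0)) =
      (∏ j : Fin k, (c - ((j : ℕ) : ℚ))) * vmd x := by
  have key := (det_expand c x).symm.trans (det_B c hc x)
  calc ∑ s : Fin k → Bool, (∏ i, (if s i then x i else c - x i)) *
        vmd (fun i => x i - (if s i then 1 else 0))
      = ∑ s : Fin k → Bool, eps k * ((∏ i, (if s i then x i else c - x i)) *
        (Matrix.vandermonde (fun i => x i - (if s i then 1 else 0))).det) := by
        apply Finset.sum_congr rfl
        intro s _
        rw [vmd_eq_eps_det]; ring
    _ = eps k * ((∏ j : Fin k, (c - ((j : ℕ) : ℚ))) * (Matrix.vandermonde x).det) := by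
        rw [← Finset.mul_sum, key]
    _ = (∏ j : Fin k, (c - ((j : ℕ) : ℚ))) * vmd x := by
        rw [vmd_eq_eps_det]; ring

end S0

namespace S0
open Finset

variable {d : ℕ}

/-- the `x` vector: `m_i` as a rational. -/
noncomputable def xq (d : ℕ) (n : Fin (d + 1) → ℕ) : Fin (d + 1) → ℚ :=
  fun i => ((n i + d - (i : ℕ) : ℕ) : ℚ)

lemma xq_cast (n : Fin (d + 1) → ℕ) (i : Fin (d + 1)) :
    xq d n i = (n i : ℚ) + d - (i : ℕ) := by
  have hi : (i : ℕ) ≤ n i + d := by have := i.is_le; omega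
  rw [xq, Nat.cast_sub hi]
  push_cast
  ring

end S0

namespace S0
open Finset

lemma term_zero (d : ℕ) (n : Fin (d + 1) → ℕ) (hmono : ∀ i : Fin d, n i.succ ≤ n i.castSucc)
    (c : ℚ) (s : Fin (d + 1) → Bool) (hbad : ∃ i, s i = true ∧ n i = 0) :
    (∏ i, (if s i then xq d n i else c - xq d n i)) *
      vmd (fun i => xq d n i - (if s i then 1 else 0)) = 0 := by
  obtain ⟨i0, hsi0, hni0⟩ := hbad
  have key : ∀ t : ℕ, ∀ i : Fin (d + 1), d ≤ (i : ℕ) + t → s i = true → n i = 0 →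
      (∏ i, (if s i then xq d n i else c - xq d n i)) *
        vmd (fun i => xq d n i - (if s i then 1 else 0)) = 0 := by
    intro t
    induction t with
    | zero =>
      intro i hdi hsi hni
      have hid : (i : ℕ) = d := le_antisymm i.is_le (by omega)
      apply mul_eq_zero_of_left
      apply Finset.prod_eq_zero (Finset.mem_univ i)
      rw [if_pos hsi]
      rw [xq, hni, hid]
      simp
    | succ t ih =>
      intro i hdi hsi hni
      by_cases hid : (i : ℕ) = d
      · apply mul_eq_zero_of_left
        apply Finset.prod_eq_zero (Finset.mem_univ i)
        rw [if_pos hsi]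
        rw [xq, hni, hid]
        simp
      · have hlt : (i : ℕ) < d := lt_of_le_of_ne i.is_le hid
        have hcast : (⟨(i : ℕ), hlt⟩ : Fin d).castSucc = i := by
          ext; simp
        have hsucc : n (⟨(i : ℕ), hlt⟩ : Fin d).succ = 0 := by
          have := hmono ⟨(i : ℕ), hlt⟩
          rw [hcast] at this
          omega
        cases hs2 : s (⟨(i : ℕ), hlt⟩ : Fin d).succ with
        | true => exact ih _ (by simp [Fin.val_succ]; omega) hs2 hsucc
        | false =>
          apply mul_eq_zero_of_right
          apply vmd_zero_of_eq (i := i) (j := (⟨(i : ℕ), hlt⟩ : Fin d).succ)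
          · simp only [Fin.lt_def, Fin.val_succ, Fin.val_mk]
            omega
          · rw [if_pos hsi, hs2]
            simp only [Bool.false_eq_true, if_false, sub_zero]
            rw [xq_cast, xq_cast, hni, hsucc, Fin.val_succ]
            push_cast
            ring
  exact key d i0 (by omega) hsi0 hni0

lemma Fq_sub_eq (d N : ℕ) (n : Fin (d + 1) → ℕ) (s : Fin (d + 1) → Bool)
    (hadm : ∀ i, s i = true → 1 ≤ n i) :
    Fq d N (fun i => n i - if s i then 1 else 0) *
        ((∏ i : Fin (d + 1), ((n i + d - (i : ℕ)).factorial : ℚ)) *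
          ∏ i : Fin (d + 1), ((N : ℚ) + 1 + (i : ℕ))) =
      (∏ i : Fin (d + 1), ∏ k ∈ Finset.range (n i), ((N : ℚ) + 1 + (i : ℕ) - (k : ℕ))) *
        ((∏ i, (if s i then xq d n i else ((N : ℚ) + 1 + d) - xq d n i)) *
          vmd (fun i => xq d n i - (if s i then 1 else 0))) := by
  have hx' : (fun i : Fin (d + 1) => (((n i - if s i then 1 else 0) + d - (i : ℕ) : ℕ) : ℚ)) =
      fun i => xq d n i - (if s i then 1 else 0) := by
    funext i
    cases hsi : s i with
    | true =>
      have h1 : 1 ≤ n i := hadm i hsi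
      have hi := i.is_le
      rw [if_pos rfl, if_pos rfl, xq_cast]
      rw [show (n i - 1) + d - (i : ℕ) = (n i + d - (i : ℕ)) - 1 by omega]
      rw [Nat.cast_sub (by omega), Nat.cast_sub (by exact_mod_cast (by omega : (i:ℕ) ≤ n i + d) )]
      push_cast
      ring
    | false =>
      simp [xq]
  have hper : ∀ i : Fin (d + 1),
      (∏ k ∈ Finset.range (n i - if s i then 1 else 0), ((N : ℚ) + (i : ℕ) - (k : ℕ))) *
          ((n i + d - (i : ℕ)).factorial : ℚ) * ((N : ℚ) + 1 + (i : ℕ)) =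
        (∏ k ∈ Finset.range (n i), ((N : ℚ) + 1 + (i : ℕ) - (k : ℕ))) *
          (if s i then xq d n i else ((N : ℚ) + 1 + d) - xq d n i) *
          (((n i - if s i then 1 else 0) + d - (i : ℕ)).factorial : ℚ) := by
    intro i
    have hi := i.is_le
    cases hsi : s i with
    | false =>
      simp only [Bool.false_eq_true, if_false, Nat.sub_zero]
      have h1 : ∏ k ∈ Finset.range (n i + 1), ((N : ℚ) + 1 + (i : ℕ) - (k : ℕ)) =
          (∏ k ∈ Finset.range (n i), ((N : ℚ) + 1 + (i : ℕ) - (k : ℕ))) *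
            ((N : ℚ) + 1 + (i : ℕ) - (n i : ℕ)) := Finset.prod_range_succ _ _
      have h2 : ∏ k ∈ Finset.range (n i + 1), ((N : ℚ) + 1 + (i : ℕ) - (k : ℕ)) =
          (∏ k ∈ Finset.range (n i), ((N : ℚ) + (i : ℕ) - (k : ℕ))) * ((N : ℚ) + 1 + (i : ℕ)) := by
        rw [Finset.prod_range_succ']
        congr 1
        · apply Finset.prod_congr rfl
          intro k _
          push_cast
          ring
        · norm_num
      have h3 : ((N : ℚ) + 1 + d) - xq d n i = (N : ℚ) + 1 + (i : ℕ) - (n i : ℕ) := by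
        rw [xq_cast]; ring
      rw [h3]
      linear_combination (-((n i + d - (i : ℕ)).factorial : ℚ)) * (h1.symm.trans h2)
    | true =>
      have h1 : 1 ≤ n i := hadm i hsi
      simp only [if_true]
      obtain ⟨M, hM⟩ : ∃ M, n i + d - (i : ℕ) = M + 1 := ⟨n i + d - (i : ℕ) - 1, by omega⟩
      have heq2 : (n i - 1) + d - (i : ℕ) = M := by omega
      have hfac : ((n i + d - (i : ℕ)).factorial : ℚ) =
          ((M + 1 : ℕ) : ℚ) * (((n i - 1) + d - (i : ℕ)).factorial : ℚ) := by
        rw [hM, heq2, Nat.factorial_succ]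
        push_cast
        ring
      have hxm : xq d n i = ((M + 1 : ℕ) : ℚ) := by
        rw [xq, hM]
      have h2 : ∏ k ∈ Finset.range (n i), ((N : ℚ) + 1 + (i : ℕ) - (k : ℕ)) =
          (∏ k ∈ Finset.range (n i - 1), ((N : ℚ) + (i : ℕ) - (k : ℕ))) * ((N : ℚ) + 1 + (i : ℕ)) := by
        rw [show n i = (n i - 1) + 1 by omega, Finset.prod_range_succ']
        congr 1
        · apply Finset.prod_congr rfl
          intro k _
          push_cast
          ring
        · norm_num
      rw [hfac, hxm, h2]
      push_cast
      ring
  have hprod := Finset.prod_congr rfl (fun i (_ : i ∈ Finset.univ) => hper i)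
  rw [Finset.prod_mul_distrib, Finset.prod_mul_distrib, Finset.prod_mul_distrib,
    Finset.prod_mul_distrib] at hprod
  have hden : (∏ i : Fin (d + 1), (((n i - if s i then 1 else 0) + d - (i : ℕ)).factorial : ℚ)) ≠ 0 :=
    Finset.prod_ne_zero_iff.mpr (fun i _ => Nat.cast_ne_zero.mpr (Nat.factorial_ne_zero _))
  rw [Fq, hx']
  rw [div_mul_eq_mul_div, div_eq_iff hden]
  linear_combination vmd (fun i => xq d n i - (if s i then 1 else 0)) * hprod

end S0

namespace S0
open Finset

lemma F_rec (d N : ℕ) (n : Fin (d + 1) → ℕ) (hmono : ∀ i : Fin d, n i.succ ≤ n i.castSucc) :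
    Fq d (N + 1) n =
      ∑ s ∈ Finset.univ.filter (fun s : Fin (d + 1) → Bool => ∀ i, s i = true → 1 ≤ n i),
        Fq d N (fun i => n i - if s i then 1 else 0) := by
  have hc : ∀ j : Fin (d + 1), ((N : ℚ) + 1 + d) - ((j : ℕ) : ℚ) ≠ 0 := by
    intro j
    have h1 : ((j : ℕ) : ℚ) ≤ (d : ℚ) := by exact_mod_cast j.is_le
    have h2 : (0 : ℚ) ≤ (N : ℚ) := Nat.cast_nonneg N
    intro h
    nlinarith
  have key := alg ((N : ℚ) + 1 + d) hc (xq d n)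
  have hMne : (∏ i : Fin (d + 1), ((n i + d - (i : ℕ)).factorial : ℚ)) ≠ 0 :=
    Finset.prod_ne_zero_iff.mpr (fun i _ => Nat.cast_ne_zero.mpr (Nat.factorial_ne_zero _))
  have hPne : (∏ i : Fin (d + 1), ((N : ℚ) + 1 + (i : ℕ))) ≠ 0 :=
    Finset.prod_ne_zero_iff.mpr (fun i _ => by positivity)
  have hD : ((∏ i : Fin (d + 1), ((n i + d - (i : ℕ)).factorial : ℚ)) *
      ∏ i : Fin (d + 1), ((N : ℚ) + 1 + (i : ℕ))) ≠ 0 := mul_ne_zero hMne hPne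
  apply mul_right_cancel₀ hD
  rw [Finset.sum_mul]
  rw [Finset.sum_congr rfl (fun s hs =>
    Fq_sub_eq d N n s (Finset.mem_filter.mp hs).2)]
  rw [Finset.sum_subset (Finset.filter_subset _ _) (fun s _ hs => by
    have hbad : ∃ i, s i = true ∧ n i = 0 := by
      rw [Finset.mem_filter] at hs
      push_neg at hs
      obtain ⟨i, hi1, hi2⟩ := hs (Finset.mem_univ s)
      exact ⟨i, hi1, by omega⟩
    rw [term_zero d n hmono ((N : ℚ) + 1 + d) s hbad, mul_zero])]
  rw [← Finset.mul_sum, key]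
  have hprod_c : (∏ j : Fin (d + 1), (((N : ℚ) + 1 + d) - ((j : ℕ) : ℚ))) =
      ∏ i : Fin (d + 1), ((N : ℚ) + 1 + (i : ℕ)) := by
    rw [Fin.prod_univ_eq_prod_range (fun t => ((N : ℚ) + 1 + d) - (t : ℚ)) (d + 1),
      Fin.prod_univ_eq_prod_range (fun t => ((N : ℚ) + 1 + (t : ℚ))) (d + 1)]
    rw [← Finset.prod_range_reflect (fun t => ((N : ℚ) + 1 + (t : ℚ))) (d + 1)]
    apply Finset.prod_congr rfl
    intro t ht
    rw [Finset.mem_range] at ht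
    rw [show d + 1 - 1 - t = d - t from rfl, Nat.cast_sub (by omega : t ≤ d)]
    ring
  rw [hprod_c, Fq]
  rw [show (fun i : Fin (d + 1) => ((n i + d - (i : ℕ) : ℕ) : ℚ)) = xq d n from rfl]
  have hA : (∏ i : Fin (d + 1), ∏ k ∈ Finset.range (n i), (((N + 1 : ℕ) : ℚ) + (i : ℕ) - (k : ℕ))) =
      ∏ i : Fin (d + 1), ∏ k ∈ Finset.range (n i), ((N : ℚ) + 1 + (i : ℕ) - (k : ℕ)) := by
    apply Finset.prod_congr rfl
    intro i _
    apply Finset.prod_congr rfl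
    intro k _
    push_cast
    ring
  rw [hA, div_mul_eq_mul_div, div_eq_iff hMne]
  ring

end S0

namespace S0
open Finset

variable {d N : ℕ}

instance solFinite (d N : ℕ) (n : Fin (d + 1) → ℕ) :
    Finite {v : Fin N → Fin (d + 1) → ℕ //
    (∀ k i, v k i ≤ 1) ∧
    (∀ i, ∑ k, v k i = n i) ∧
    (∀ L : Fin N, ∀ i j : Fin (d + 1), i ≤ j →
      ∑ k ∈ Finset.univ.filter (fun k => k ≤ L), v k j ≤
        ∑ k ∈ Finset.univ.filter (fun k => k ≤ L), v k i)} := by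
  apply Finite.of_injective (fun v => (fun k i => (⟨v.1 k i, Nat.lt_succ_of_le (v.2.1 k i)⟩ : Fin 2) : Fin N → Fin (d + 1) → Fin 2))
  intro v w h
  apply Subtype.ext
  funext k i
  have := congrFun (congrFun h k) i
  simpa [Fin.mk.injEq] using this

lemma nat_card_sigma {ι : Type*} [Fintype ι] {α : ι → Type*} [∀ i, Finite (α i)] :
    Nat.card (Σ i, α i) = ∑ i, Nat.card (α i) := by
  letI : ∀ i, Fintype (α i) := fun i => Fintype.ofFinite _
  simp [Nat.card_eq_fintype_card, Fintype.card_sigma]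

lemma sum_filter_castSucc (f : Fin (N + 1) → ℕ) (L : Fin N) :
    ∑ k ∈ Finset.univ.filter (fun k => k ≤ L.castSucc), f k =
      ∑ k ∈ Finset.univ.filter (fun k => k ≤ L), f k.castSucc := by
  rw [show Finset.univ.filter (fun k => k ≤ L.castSucc) =
      (Finset.univ.filter (fun k : Fin N => k ≤ L)).image Fin.castSucc from ?_]
  · rw [Finset.sum_image (fun a _ b _ h => Fin.castSucc_injective N h)]
  · ext a
    simp only [Finset.mem_filter, Finset.mem_univ, true_and, Finset.mem_image]
    constructor
    · intro ha
      have h1 : (a : ℕ) ≤ (L : ℕ) := by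
        simpa [Fin.le_def] using ha
      have h2 : (a : ℕ) < N := lt_of_le_of_lt h1 L.is_lt
      refine ⟨⟨(a : ℕ), h2⟩, ?_, ?_⟩
      · rw [Fin.le_def]
        exact h1
      · rfl
    · rintro ⟨b, hb, rfl⟩
      exact Fin.castSucc_le_castSucc_iff.mpr hb

def Sol (d N : ℕ) (n : Fin (d + 1) → ℕ) :=
  {v : Fin N → Fin (d + 1) → ℕ //
    (∀ k i, v k i ≤ 1) ∧
    (∀ i, ∑ k, v k i = n i) ∧
    (∀ L : Fin N, ∀ i j : Fin (d + 1), i ≤ j →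
      ∑ k ∈ Finset.univ.filter (fun k => k ≤ L), v k j ≤
        ∑ k ∈ Finset.univ.filter (fun k => k ≤ L), v k i)}

instance (d N : ℕ) (n : Fin (d + 1) → ℕ) : Finite (Sol d N n) := solFinite d N n

lemma ballotCount_eq (d N : ℕ) (n : Fin (d + 1) → ℕ) :
    ballotCount d N n = Nat.card (Sol d N n) := rfl

lemma ballot_zero (d : ℕ) (n : Fin (d + 1) → ℕ) :
    ballotCount d 0 n = if n = 0 then 1 else 0 := by
  rw [ballotCount_eq]
  split_ifs with h
  · subst h
    haveI : Nonempty (Sol d 0 (0 : Fin (d + 1) → ℕ)) := by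
      refine ⟨⟨fun k => k.elim0, fun k => k.elim0, fun i => by simp, fun L => L.elim0⟩⟩
    haveI : Subsingleton (Sol d 0 (0 : Fin (d + 1) → ℕ)) := by
      constructor
      intro a b
      apply Subtype.ext
      funext k
      exact k.elim0
    exact Nat.card_unique
  · haveI : IsEmpty (Sol d 0 n) := by
      constructor
      intro v
      apply h
      funext i
      have := v.2.2.1 i
      simpa using this.symm
    exact Nat.card_of_isEmpty

lemma ballot_notmono (d N : ℕ) (n : Fin (d + 1) → ℕ) (h : ∃ i : Fin d, n i.castSucc < n i.succ) :
    ballotCount d (N + 1) n = 0 := by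
  obtain ⟨i, hi⟩ := h
  rw [ballotCount_eq]
  haveI : IsEmpty (Sol d (N + 1) n) := by
    constructor
    rintro ⟨v, h1, h2, h3⟩
    have h4 := h3 (Fin.last N) i.castSucc i.succ (le_of_lt (Fin.castSucc_lt_succ (i := i)))
    rw [show Finset.univ.filter (fun k : Fin (N + 1) => k ≤ Fin.last N) = Finset.univ from by
      ext k; simp [Fin.le_last]] at h4
    rw [h2 i.castSucc, h2 i.succ] at h4
    omega
  exact Nat.card_of_isEmpty

def theEquiv (d N : ℕ) (n : Fin (d + 1) → ℕ) (hm : ∀ i j : Fin (d + 1), i ≤ j → n j ≤ n i) :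
    Sol d (N + 1) n ≃ Σ s : {s : Fin (d + 1) → Bool // ∀ i, s i = true → 1 ≤ n i},
      Sol d N (fun i => n i - if s.1 i then 1 else 0) where
  toFun v := by
    refine ⟨⟨fun i => decide (v.1 (Fin.last N) i = 1), ?_⟩, ⟨fun k i => v.1 k.castSucc i, ?_, ?_, ?_⟩⟩
    · intro i hsi
      have hv : v.1 (Fin.last N) i = 1 := of_decide_eq_true hsi
      have hle : v.1 (Fin.last N) i ≤ ∑ k, v.1 k i :=
        Finset.single_le_sum (f := fun k => v.1 k i) (fun k _ => Nat.zero_le _)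
          (Finset.mem_univ (Fin.last N))
      rw [v.2.2.1 i] at hle
      omega
    · exact fun k i => v.2.1 _ i
    · intro i
      have hsum := v.2.2.1 i
      rw [Fin.sum_univ_castSucc] at hsum
      have hite : (if decide (v.1 (Fin.last N) i = 1) then 1 else 0) = v.1 (Fin.last N) i := by
        rcases Nat.le_one_iff_eq_zero_or_eq_one.mp (v.2.1 (Fin.last N) i) with h0 | h0 <;> simp [h0]
      show ∑ k : Fin N, v.1 k.castSucc i = n i - (if decide (v.1 (Fin.last N) i = 1) then 1 else 0)
      omega
    · intro L i j hij
      have := v.2.2.2 L.castSucc i j hij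
      rwa [sum_filter_castSucc (fun k => v.1 k j) L, sum_filter_castSucc (fun k => v.1 k i) L] at this
  invFun p := by
    refine ⟨Fin.snoc p.2.1 (fun i => if p.1.1 i then 1 else 0), ?_⟩
    obtain ⟨⟨s, hs⟩, ⟨w, hw1, hw2, hw3⟩⟩ := p
    have hsum : ∀ i, ∑ k, (Fin.snoc w (fun i => if s i then 1 else 0) : Fin (N + 1) → Fin (d + 1) → ℕ) k i = n i := by
      intro i
      rw [Fin.sum_univ_castSucc]
      simp only [Fin.snoc_castSucc, Fin.snoc_last]
      rw [hw2 i]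
      show n i - (if s i then 1 else 0) + (if s i then 1 else 0) = n i
      split_ifs with h
      · have := hs i h
        omega
      · omega
    refine ⟨?_, hsum, ?_⟩
    · intro k i
      induction k using Fin.lastCases with
      | last =>
        rw [Fin.snoc_last]
        split_ifs <;> omega
      | cast k =>
        rw [Fin.snoc_castSucc]
        exact hw1 k i
    · intro L i j hij
      induction L using Fin.lastCases with
      | last =>
        rw [show Finset.univ.filter (fun k : Fin (N + 1) => k ≤ Fin.last N) = Finset.univ from by
          ext k; simp [Fin.le_last]]
        rw [hsum i, hsum j]
        exact hm i j hij
      | cast L =>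
        rw [sum_filter_castSucc, sum_filter_castSucc]
        simp only [Fin.snoc_castSucc]
        exact hw3 L i j hij
  left_inv := by
    intro v
    apply Subtype.ext
    have h1 : (fun i => if decide (v.1 (Fin.last N) i = 1) then 1 else 0) = v.1 (Fin.last N) := by
      funext i
      rcases Nat.le_one_iff_eq_zero_or_eq_one.mp (v.2.1 (Fin.last N) i) with h0 | h0 <;> simp [h0]
    show Fin.snoc (fun k i => v.1 k.castSucc i) (fun i => if decide (v.1 (Fin.last N) i = 1) then 1 else 0) = v.1
    rw [h1]
    exact Fin.snoc_init_self v.1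
  right_inv := by
    rintro ⟨⟨s, hs⟩, ⟨w, hw⟩⟩
    have hdec : ∀ i, decide ((if s i then 1 else 0) = (1 : ℕ)) = s i := by
      intro i
      cases hsi : s i <;> simp
    apply Sigma.ext
    · apply Subtype.ext
      funext i
      simp only [Fin.snoc_last]
      exact hdec i
    · apply (Subtype.heq_iff_coe_eq ?_).mpr
      · funext k i
        simp [Fin.snoc_castSucc]
      · intro x
        simp only [Fin.snoc_last, hdec]

lemma ballot_rec (d N : ℕ) (n : Fin (d + 1) → ℕ) (hm : ∀ i j : Fin (d + 1), i ≤ j → n j ≤ n i) :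
    ballotCount d (N + 1) n =
      ∑ s ∈ Finset.univ.filter (fun s : Fin (d + 1) → Bool => ∀ i, s i = true → 1 ≤ n i),
        ballotCount d N (fun i => n i - if s i then 1 else 0) := by
  rw [ballotCount_eq, Nat.card_congr (theEquiv d N n hm), nat_card_sigma]
  rw [Finset.sum_subtype (p := fun s : Fin (d + 1) → Bool => ∀ i, s i = true → 1 ≤ n i)
    (Finset.univ.filter (fun s : Fin (d + 1) → Bool => ∀ i, s i = true → 1 ≤ n i))
    (fun s => by simp) (fun s => ballotCount d N (fun i => n i - if s i then 1 else 0))]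
  rfl

lemma Fq_zero_of_step (d N : ℕ) (n : Fin (d + 1) → ℕ) (i : Fin d)
    (h : n i.succ = n i.castSucc + 1) : Fq d N n = 0 := by
  rw [Fq]
  rw [show (fun i : Fin (d + 1) => ((n i + d - (i : ℕ) : ℕ) : ℚ)) = xq d n from rfl]
  rw [vmd_zero_of_eq (i := i.castSucc) (j := i.succ) (Fin.castSucc_lt_succ (i := i)) ?_]
  · simp
  · rw [xq, xq, h, Fin.val_succ, Fin.coe_castSucc]
    congr 1
    have := i.is_lt
    omega

lemma fact_prod_eq (k : ℕ) : ∀ t : ℕ, ((t.factorial : ℚ)) = ∏ a ∈ Finset.range t, ((a : ℚ) + 1) := by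
  intro t
  induction t with
  | zero => simp
  | succ t ih =>
    rw [Finset.prod_range_succ, ← ih, Nat.factorial_succ]
    push_cast
    ring

lemma vmd_base (d : ℕ) :
    vmd (fun i : Fin (d + 1) => ((d - (i : ℕ) : ℕ) : ℚ)) =
      ∏ i : Fin (d + 1), ((d - (i : ℕ)).factorial : ℚ) := by
  rw [vmd_eq]
  apply Finset.prod_congr rfl
  intro i _
  have hi := i.is_le
  rw [fact_prod_eq 0 (d - (i : ℕ))]
  refine Finset.prod_bij' (fun (j : Fin (d + 1)) (_ : j ∈ Finset.Ioi i) => (j : ℕ) - (i : ℕ) - 1)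
    (fun (a : ℕ) (ha : a ∈ Finset.range (d - (i : ℕ))) => (⟨(i : ℕ) + 1 + a, by
      rw [Finset.mem_range] at ha; omega⟩ : Fin (d + 1))) ?_ ?_ ?_ ?_ ?_
  ·
    intro j hj
    rw [Finset.mem_Ioi, Fin.lt_def] at hj
    rw [Finset.mem_range]
    have := j.is_le
    show (j : ℕ) - (i : ℕ) - 1 < d - (i : ℕ)
    omega
  ·
    intro a ha
    rw [Finset.mem_range] at ha
    rw [Finset.mem_Ioi, Fin.lt_def]
    simp
    omega
  ·
    intro j hj
    rw [Finset.mem_Ioi, Fin.lt_def] at hj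
    ext
    simp
    omega
  ·
    intro a ha
    simp
    omega
  ·
    intro j hj
    rw [Finset.mem_Ioi, Fin.lt_def] at hj
    have hj' := j.is_le
    have h1 : ((d - (i : ℕ) : ℕ) : ℚ) = (d : ℚ) - ((i : ℕ) : ℚ) := by
      rw [Nat.cast_sub hi]
    have h2 : ((d - (j : ℕ) : ℕ) : ℚ) = (d : ℚ) - ((j : ℕ) : ℚ) := by
      rw [Nat.cast_sub hj']
    have h3 : (((j : ℕ) - (i : ℕ) - 1 : ℕ) : ℚ) = ((j : ℕ) : ℚ) - ((i : ℕ) : ℚ) - 1 := by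
      rw [Nat.cast_sub (by omega), Nat.cast_sub (by omega)]
      push_cast
      ring
    rw [h1, h2, h3]
    ring

lemma Fq_base (d : ℕ) : Fq d 0 (0 : Fin (d + 1) → ℕ) = 1 := by
  rw [Fq]
  have h1 : (fun i : Fin (d + 1) => (((0 : Fin (d + 1) → ℕ) i + d - (i : ℕ) : ℕ) : ℚ)) =
      fun i : Fin (d + 1) => ((d - (i : ℕ) : ℕ) : ℚ) := by
    funext i
    simp
  rw [h1, vmd_base]
  simp only [Pi.zero_apply, Nat.zero_add, Finset.range_zero, Finset.prod_empty,
    Finset.prod_const_one, one_mul]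
  apply div_self
  exact Finset.prod_ne_zero_iff.mpr (fun i _ => Nat.cast_ne_zero.mpr (Nat.factorial_ne_zero _))

end S0

/-- Theorem 1 of the paper: if `†(N,n_0,…,n_d) = 0` then `C = 0`, and if
`†(N,n_0,…,n_d) = 1` (i.e. `n_{i-1} + 1 ≥ n_i` for all `1 ≤ i ≤ d`) then `C = F`. -/
theorem statement0 (d N : ℕ) (n : Fin (d + 1) → ℕ) :
    ((¬ ∀ i : Fin d, n i.succ ≤ n i.castSucc + 1) → ballotCount d N n = 0) ∧
    ((∀ i : Fin d, n i.succ ≤ n i.castSucc + 1) → (ballotCount d N n : ℚ) = Fq d N n) := by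
  constructor
  · intro h
    push_neg at h
    obtain ⟨i, hi⟩ := h
    cases N with
    | zero =>
      rw [S0.ballot_zero, if_neg]
      intro h0
      rw [h0] at hi
      simp at hi
    | succ N => exact S0.ballot_notmono d N n ⟨i, by omega⟩
  · induction N generalizing n with
    | zero =>
      intro hd
      by_cases h0 : n = 0
      · subst h0
        rw [S0.ballot_zero, if_pos rfl, S0.Fq_base]
        simp
      · rw [S0.ballot_zero, if_neg h0]
        by_cases hmono : ∀ i : Fin d, n i.succ ≤ n i.castSucc
        · have hanti : ∀ i j : Fin (d + 1), i ≤ j → n j ≤ n i := fun i j hij =>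
            (Fin.antitone_iff_succ_le.mpr hmono) hij
          have hn0 : 1 ≤ n 0 := by
            by_contra hc
            apply h0
            funext i
            have := hanti 0 i (Fin.zero_le i)
            show n i = 0
            omega
          rw [Fq]
          have hA : (∏ i : Fin (d + 1), ∏ k ∈ Finset.range (n i),
              (((0 : ℕ) : ℚ) + ((i : ℕ) : ℚ) - ((k : ℕ) : ℚ))) = 0 := by
            apply Finset.prod_eq_zero (Finset.mem_univ (0 : Fin (d + 1)))
            apply Finset.prod_eq_zero (Finset.mem_range.mpr hn0)
            simp
          rw [hA, zero_mul, zero_div]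
          simp
        · push_neg at hmono
          obtain ⟨i, hi⟩ := hmono
          have hstep : n i.succ = n i.castSucc + 1 := by
            have := hd i
            omega
          rw [S0.Fq_zero_of_step d 0 n i hstep]
          simp
    | succ N ih =>
      intro hd
      by_cases hmono : ∀ i : Fin d, n i.succ ≤ n i.castSucc
      · have hanti : ∀ i j : Fin (d + 1), i ≤ j → n j ≤ n i := fun i j hij =>
          (Fin.antitone_iff_succ_le.mpr hmono) hij
        rw [S0.ballot_rec d N n hanti, S0.F_rec d N n hmono, Nat.cast_sum]
        apply Finset.sum_congr rfl
        intro s hs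
        apply ih
        intro i
        have h1 := hd i
        have h2 := hmono i
        show n i.succ - (if s i.succ then 1 else 0) ≤ n i.castSucc - (if s i.castSucc then 1 else 0) + 1
        split_ifs <;> omega
      · push_neg at hmono
        obtain ⟨i, hi⟩ := hmono
        have hstep : n i.succ = n i.castSucc + 1 := by
          have := hd i
          omega
        rw [S0.ballot_notmono d N n ⟨i, hi⟩, S0.Fq_zero_of_step d (N + 1) n i hstep]
        simp
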